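/- Let G be a finite abelian group and F_q a field with char(F_q) ∤ |G|. For each co-cyclic subgroup H of G, the idempotent e_H is the sum of all primitive idempotents e of F_q G such that H_e = H (i.e., e·e_H = e). -/

import Mathlib

open scoped Classical

/-- `hat F H` is the element `Ĥ = (1/|H|) ∑_{h ∈ H} h` of the group algebra `F G`. -/
noncomputable def hat (F : Type) [Field F] {G : Type} [Group G] [Fintype G]
    (H : Subgroup G) : MonoidAlgebra F G :=
  (Nat.card H : F)⁻¹ • ∑ h ∈ (H : Set G).toFinset, MonoidAlgebra.single h (1 : F)

/-- The `p`-primary (Sylow) component of a commutative group `G`: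
the subgroup of elements of `p`-power order. -/
def pComp (G : Type) [CommGroup G] (p : ℕ) : Subgroup G where
  carrier := {x | ∃ n : ℕ, x ^ p ^ n = 1}
  one_mem' := ⟨0, one_pow _⟩
  mul_mem' := by
    rintro a b ⟨m, hm⟩ ⟨k, hk⟩
    refine ⟨m + k, ?_⟩
    have ha : a ^ p ^ (m + k) = 1 := by rw [pow_add, pow_mul, hm, one_pow]
    have hb : b ^ p ^ (m + k) = 1 := by rw [add_comm, pow_add, pow_mul, hk, one_pow]
    rw [mul_pow, ha, hb, one_mul]
  inv_mem' := by rintro a ⟨m, hm⟩; exact ⟨m, by rw [inv_pow, hm, inv_one]⟩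

/-- `H` is a co-cyclic subgroup of `G`: the quotient `G/H` is a nontrivial cyclic group. -/
def Cocyclic {G : Type} [CommGroup G] (H : Subgroup G) : Prop :=
  IsCyclic (G ⧸ H) ∧ Nontrivial (G ⧸ H)

/-- `K` is a co-cyclic subgroup of the subgroup `A`. -/
def CocyclicIn {G : Type} [CommGroup G] (K A : Subgroup G) : Prop :=
  K ≤ A ∧ IsCyclic (↥A ⧸ K.subgroupOf A) ∧ Nontrivial (↥A ⧸ K.subgroupOf A)

/-- `sharp` assigns to each co-cyclic subgroup `K` of a Sylow subgroup `G_p` the unique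
subgroup `K♯` with `K ≤ K♯ ≤ G_p` and `[K♯ : K] = p`. -/
def IsSharp {G : Type} [CommGroup G] [Fintype G] (sharp : Subgroup G → Subgroup G) : Prop :=
  ∀ p ∈ (Fintype.card G).primeFactors, ∀ K : Subgroup G, CocyclicIn K (pComp G p) →
    (K ≤ sharp K ∧ sharp K ≤ pComp G p ∧ K.relIndex (sharp K) = p) ∧
    ∀ L : Subgroup G, K ≤ L → L ≤ pComp G p → K.relIndex L = p → L = sharp K

/-- The idempotent `e_H` associated to a co-cyclic subgroup `H` of a finite abelian
group `G`: the product over the primes `p` dividing `|G|` of `Ĝ_p` (if `H_p = G_p`) or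
`Ĥ_p − Ĥ_p♯` (otherwise), where `H_p = H ∩ G_p` is the `p`-Sylow component of `H`. -/
noncomputable def eH (F : Type) [Field F] {G : Type} [CommGroup G] [Fintype G]
    (sharp : Subgroup G → Subgroup G) (H : Subgroup G) : MonoidAlgebra F G :=
  ∏ p ∈ (Fintype.card G).primeFactors,
    if pComp G p ⊓ H = pComp G p then hat F (pComp G p)
    else hat F (pComp G p ⊓ H) - hat F (sharp (pComp G p ⊓ H))

/-- `e` is a primitive idempotent: a nonzero idempotent which is not the sum of two
nonzero orthogonal idempotents. -/
def IsPrimIdem {R : Type} [Ring R] (e : R) : Prop :=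
  e ≠ 0 ∧ e * e = e ∧
    ∀ a b : R, a * a = a → b * b = b → a * b = 0 → b * a = 0 → e = a + b →
      a = 0 ∨ b = 0


section Aux

set_option linter.unusedSectionVars false

theorem reduced_of_ss {R : Type} [CommRing R] [IsSemisimpleRing R] : IsReduced R := by
  constructor
  intro x hx
  obtain ⟨e, he, hspan⟩ := IsSemisimpleRing.ideal_eq_span_idempotent (Ideal.span {x})
  have hex : x ∣ e := by
    have : e ∈ Ideal.span ({x} : Set R) := by
      rw [hspan]; exact Ideal.subset_span rfl
    rwa [Ideal.mem_span_singleton] at this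
  obtain ⟨c, rfl⟩ := hex
  have hne : IsNilpotent (x * c) := (Commute.all x c).isNilpotent_mul_right hx
  have he0 : x * c = 0 := he.eq_zero_of_isNilpotent hne
  have : x ∈ Ideal.span ({x * c} : Set R) := by rw [← hspan]; exact Ideal.subset_span rfl
  rw [he0, Ideal.span_singleton_eq_bot.mpr rfl] at this
  simpa using this

lemma IsPrimIdem.map {R S : Type} [Ring R] [Ring S] (φ : R ≃+* S) {x : R}
    (h : IsPrimIdem x) : IsPrimIdem (φ x) := by
  obtain ⟨h0, hi, hp⟩ := h
  refine ⟨fun hz => h0 (by simpa using φ.injective (by simpa using hz)), by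
    rw [← map_mul, hi], ?_⟩
  intro a b haa hbb hab hba hsum
  rcases hp (φ.symm a) (φ.symm b) (by rw [← map_mul, haa]) (by rw [← map_mul, hbb])
    (by rw [← map_mul, hab, map_zero]) (by rw [← map_mul, hba, map_zero])
    (by apply φ.injective; rw [map_add]; simpa using hsum) with h | h
  · left; have := congrArg φ h; simpa using this
  · right; have := congrArg φ h; simpa using this

section Pi
variable {ι : Type} [Fintype ι] {K : ι → Type} [∀ i, Field (K i)]

lemma single_mul (i : ι) (v : ∀ j, K j) : Pi.single i (1 : K i) * v = Pi.single i (v i) := by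
  funext j
  by_cases h : j = i
  · subst h; simp
  · simp [Pi.single_eq_of_ne h]

lemma idem_coord {u : ∀ j, K j} (hu : u * u = u) (i : ι) : u i = 0 ∨ u i = 1 := by
  have h : u i * (u i - 1) = 0 := by
    have := congrFun hu i; simp only [Pi.mul_apply] at this; linear_combination this
  rcases mul_eq_zero.mp h with h | h
  · exact Or.inl h
  · exact Or.inr (by linear_combination h)

lemma prim_iff_pi {u : ∀ j, K j} :
    IsPrimIdem u ↔ ∃ i, u = Pi.single i (1 : K i) := by
  constructor
  · rintro ⟨hne, hidem, hprim⟩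
    have hex : ∃ i, u i = 1 := by
      by_contra hc
      push_neg at hc
      apply hne
      funext j
      rcases idem_coord hidem j with h | h
      · exact h
      · exact absurd h (hc j)
    obtain ⟨i, hi⟩ := hex
    refine ⟨i, ?_⟩
    set a : ∀ j, K j := Pi.single i 1 with ha
    set b : ∀ j, K j := u - a with hb
    have hbco : ∀ j, b j = if j = i then 0 else u j := by
      intro j; by_cases h : j = i
      · subst h; simp [hb, ha, hi]
      · rw [if_neg h]; simp [hb, ha, Pi.single_eq_of_ne h]
    have haa : a * a = a := by
      funext j; by_cases h : j = i
      · subst h; simp [ha]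
      · simp [ha, Pi.single_eq_of_ne h]
    have hbb : b * b = b := by
      funext j
      by_cases h : j = i
      · simp [Pi.mul_apply, hbco j, h]
      · simp only [Pi.mul_apply, hbco j, if_neg h]
        exact congrFun hidem j
    have hab : a * b = 0 := by
      funext j; by_cases h : j = i
      · subst h; simp [Pi.mul_apply, hbco j]
      · simp [Pi.mul_apply, ha, Pi.single_eq_of_ne h]
    have hba : b * a = 0 := by rw [mul_comm]; exact hab
    have hsum : u = a + b := by rw [hb]; ring
    rcases hprim a b haa hbb hab hba hsum with h | h
    · exfalso
      have h1 : a i = 1 := by simp [ha]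
      rw [h] at h1; simp at h1
    · rw [hsum, h, add_zero]
  · rintro ⟨i, rfl⟩
    refine ⟨?_, ?_, ?_⟩
    · intro h
      have h1 : (Pi.single i (1:K i)) i = 0 := by rw [h]; rfl
      simp at h1
    · funext j; by_cases h : j = i
      · subst h; simp
      · simp [Pi.single_eq_of_ne h]
    · intro a b haa hbb hab hba hsum
      have hco : ∀ j, a j = 0 ∨ a j = 1 := idem_coord haa
      have hco' : ∀ j, b j = 0 ∨ b j = 1 := idem_coord hbb
      have key : ∀ j, j ≠ i → a j = 0 ∧ b j = 0 := by
        intro j hj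
        have h1 : 0 = a j + b j := by
          have := congrFun hsum j
          simpa [Pi.single_eq_of_ne hj] using this
        have h2 : a j * b j = 0 := congrFun hab j
        rcases hco j with h | h <;> rcases hco' j with h' | h'
        · exact ⟨h, h'⟩
        · exfalso; rw [h, h'] at h1; simp at h1
        · exfalso; rw [h, h'] at h1; simp at h1
        · exfalso; rw [h, h'] at h2; simp at h2
      have habi : a i * b i = 0 := congrFun hab i
      rcases mul_eq_zero.mp habi with h | h
      · left
        funext j; by_cases hj : j = i
        · subst hj; exact h
        · exact (key j hj).1
      · right
        funext j; by_cases hj : j = i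
        · subst hj; exact h
        · exact (key j hj).2

lemma single_inj {i j : ι} (h : Pi.single i (1 : K i) = Pi.single j (1 : K j)) : i = j := by
  by_contra hne
  have h2 := congrFun h i
  rw [Pi.single_eq_same] at h2
  rw [Pi.single_eq_of_ne hne] at h2
  exact one_ne_zero h2

lemma key_sum {R : Type} [CommRing R] (φ : R ≃+* ∀ i, K i) {f : R} (hf : f * f = f)
    (P : Finset R) (hP : ∀ x, x ∈ P ↔ IsPrimIdem x ∧ x * f = x) : ∑ x ∈ P, x = f := by
  set u := φ f with hu
  have huu : u * u = u := by rw [hu, ← map_mul, hf]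
  set S : Finset ι := Finset.univ.filter (fun i => u i = 1) with hS
  have hPim : P = S.image (fun i => φ.symm (Pi.single i (1 : K i))) := by
    ext x
    rw [hP, Finset.mem_image]
    constructor
    · rintro ⟨hx, hxf⟩
      have hx' : IsPrimIdem (φ x) := hx.map φ
      obtain ⟨i, hi⟩ := prim_iff_pi.mp hx'
      refine ⟨i, ?_, ?_⟩
      · rw [hS, Finset.mem_filter]
        refine ⟨Finset.mem_univ _, ?_⟩
        have := congrArg φ hxf
        rw [map_mul, hi, ← hu, single_mul] at this
        have := congrFun this i
        simpa using this
      · rw [← hi]; simp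
    · rintro ⟨i, hiS, rfl⟩
      rw [hS, Finset.mem_filter] at hiS
      constructor
      · exact (prim_iff_pi.mpr ⟨i, rfl⟩).map φ.symm
      · apply φ.injective
        rw [map_mul]
        simp only [RingEquiv.apply_symm_apply]
        rw [← hu, single_mul, hiS.2]
  rw [hPim, Finset.sum_image (fun i _ j _ h => single_inj (φ.symm.injective h)),
    ← map_sum]
  have : (∑ i ∈ S, Pi.single i (1 : K i)) = u := by
    have h1 : (∑ i ∈ Finset.univ, Pi.single i (u i)) = u := Finset.univ_sum_single u
    have h2 : (∑ i ∈ S, Pi.single i (u i)) = ∑ i ∈ Finset.univ, Pi.single i (u i) := by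
      apply Finset.sum_subset (Finset.subset_univ S)
      intro i _ hiS
      have : u i = 0 := by
        rcases idem_coord huu i with h | h
        · exact h
        · exact absurd (by rw [hS, Finset.mem_filter]; exact ⟨Finset.mem_univ _, h⟩) hiS
      rw [this, Pi.single_zero]
    rw [← h1, ← h2]
    apply Finset.sum_congr rfl
    intro i hiS
    rw [hS, Finset.mem_filter] at hiS
    rw [hiS.2]
  rw [this, hu, RingEquiv.symm_apply_apply]

end Pi

lemma hat_mul_hat (F : Type) [Field F] {G : Type} [CommGroup G] [Fintype G]
    {K L : Subgroup G} (hK : (Nat.card K : F) ≠ 0) (hKL : K ≤ L) :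
    hat F K * hat F L = hat F L := by
  unfold hat
  rw [smul_mul_assoc, mul_smul_comm, smul_smul]
  rw [Finset.sum_mul_sum]
  have hinner : ∀ k ∈ (K : Set G).toFinset,
      (∑ l ∈ (L : Set G).toFinset,
        MonoidAlgebra.single k (1:F) * MonoidAlgebra.single l (1:F)) =
      ∑ l ∈ (L : Set G).toFinset, MonoidAlgebra.single l (1 : F) := by
    intro k hk
    rw [Set.mem_toFinset] at hk
    have hkL : k ∈ L := hKL hk
    refine Finset.sum_equiv (Equiv.mulLeft k) ?_ ?_
    · intro l
      simp only [Set.mem_toFinset, Equiv.coe_mulLeft]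
      constructor
      · intro h; exact mul_mem hkL h
      · intro h
        have := mul_mem (inv_mem hkL) h
        simpa using this
    · intro l hl
      rw [MonoidAlgebra.single_mul_single, one_mul]
      rfl
  rw [Finset.sum_congr rfl hinner, Finset.sum_const]
  have hcard : ((K : Set G).toFinset.card) = Nat.card K := by
    rw [Set.toFinset_card, ← Nat.card_eq_fintype_card]; rfl
  rw [hcard, ← Nat.cast_smul_eq_nsmul F, smul_smul]
  congr 1
  rw [mul_comm ((Nat.card K : F)⁻¹) _, mul_assoc, inv_mul_cancel₀ hK, mul_one]

lemma cocyclicIn_inf {G : Type} [CommGroup G] (H A : Subgroup G) (hH : Cocyclic H)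
    (hne : A ⊓ H ≠ A) : CocyclicIn (A ⊓ H) A := by
  haveI := hH.1
  refine ⟨inf_le_left, ?_, ?_⟩
  · -- cyclic
    let g : A →* G ⧸ H := (QuotientGroup.mk' H).comp A.subtype
    have hker : g.ker = (A ⊓ H).subgroupOf A := by
      ext x
      simp only [MonoidHom.mem_ker, MonoidHom.comp_apply, QuotientGroup.mk'_apply,
        Subgroup.coe_subtype, Subgroup.mem_subgroupOf, Subgroup.mem_inf, g]
      rw [QuotientGroup.eq_one_iff]
      exact ⟨fun h => ⟨x.2, h⟩, fun h => h.2⟩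
    have e : (A ⧸ g.ker) ≃* g.range := QuotientGroup.quotientKerEquivRange g
    have hcyc : IsCyclic (A ⧸ g.ker) := isCyclic_of_surjective e.symm e.symm.surjective
    have e2 := QuotientGroup.quotientMulEquivOfEq hker
    exact isCyclic_of_surjective e2 e2.surjective
  · -- nontrivial
    have hne' : (A ⊓ H).subgroupOf A ≠ ⊤ := by
      intro htop
      apply hne
      refine le_antisymm inf_le_left ?_
      intro a ha
      have h1 : (⟨a, ha⟩ : A) ∈ (A ⊓ H).subgroupOf A := by rw [htop]; trivial
      rwa [Subgroup.mem_subgroupOf] at h1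
    refine not_subsingleton_iff_nontrivial.mp ?_
    intro hs
    exact hne' (QuotientGroup.subgroup_eq_top_of_subsingleton _ hs)

lemma card_cast_ne {F : Type} [Field F] {G : Type} [CommGroup G] [Fintype G]
    (hchar : ¬ (ringChar F ∣ Fintype.card G)) (K : Subgroup G) :
    (Nat.card K : F) ≠ 0 := by
  intro h0
  haveI : CharP F (ringChar F) := ringChar.charP F
  rw [CharP.cast_eq_zero_iff F (ringChar F)] at h0
  have hd := Subgroup.card_subgroup_dvd_card K
  rw [show (Nat.card G) = Fintype.card G from Nat.card_eq_fintype_card] at hd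
  exact hchar (h0.trans hd)

lemma eH_idem (F : Type) [Field F] {G : Type} [CommGroup G] [Fintype G]
    (hchar : ¬ (ringChar F ∣ Fintype.card G))
    (sharp : Subgroup G → Subgroup G) (hsharp : IsSharp sharp)
    (H : Subgroup G) (hH : Cocyclic H) :
    eH F sharp H * eH F sharp H = eH F sharp H := by
  unfold eH
  rw [← Finset.prod_mul_distrib]
  apply Finset.prod_congr rfl
  intro p hp
  by_cases hc : pComp G p ⊓ H = pComp G p
  · rw [if_pos hc]
    exact hat_mul_hat F (card_cast_ne hchar _) le_rfl
  · rw [if_neg hc]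
    have hcc : CocyclicIn (pComp G p ⊓ H) (pComp G p) := cocyclicIn_inf H _ hH hc
    obtain ⟨⟨hle, hle2, hrel⟩, _⟩ := hsharp p hp _ hcc
    have h1 := hat_mul_hat F (card_cast_ne hchar (pComp G p ⊓ H)) le_rfl
    have h2 := hat_mul_hat F (card_cast_ne hchar (pComp G p ⊓ H)) hle
    have h3 := hat_mul_hat F (card_cast_ne hchar (sharp (pComp G p ⊓ H))) le_rfl
    have hexp : (hat F (pComp G p ⊓ H) - hat F (sharp (pComp G p ⊓ H))) *
        (hat F (pComp G p ⊓ H) - hat F (sharp (pComp G p ⊓ H))) =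
        hat F (pComp G p ⊓ H) * hat F (pComp G p ⊓ H)
        - 2 * (hat F (pComp G p ⊓ H) * hat F (sharp (pComp G p ⊓ H)))
        + hat F (sharp (pComp G p ⊓ H)) * hat F (sharp (pComp G p ⊓ H)) := by ring
    rw [hexp, h1, h2, h3]
    ring

end Aux

theorem stmt13 (F : Type) [Field F] (G : Type) [CommGroup G] [Fintype G]
    (hchar : ¬ (ringChar F ∣ Fintype.card G))
    (sharp : Subgroup G → Subgroup G) (hsharp : IsSharp sharp)
    (H : Subgroup G) (hH : Cocyclic H)
    -- `P` is the (finite) set of all primitive idempotents `e` of `F G` with `Φ(e) = H`,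
    -- i.e. with `e · e_H = e`
    (P : Finset (MonoidAlgebra F G))
    (hP : ∀ x : MonoidAlgebra F G, x ∈ P ↔ (IsPrimIdem x ∧ x * eH F sharp H = x)) :
    ∑ x ∈ P, x = eH F sharp H := by
  have hNZ : NeZero (Fintype.card G : F) := by
    constructor
    intro h0
    haveI : CharP F (ringChar F) := ringChar.charP F
    rw [CharP.cast_eq_zero_iff F (ringChar F)] at h0
    exact hchar h0
  haveI : IsArtinianRing (MonoidAlgebra F G) := by
    have h : Module.Finite F (MonoidAlgebra F G) :=
      Module.Finite.equiv ((Finsupp.linearEquivFunOnFinite F F G).symm.trans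
        (MonoidAlgebra.coeffLinearEquiv F).symm)
    exact isArtinian_of_tower F (inferInstance : IsArtinian F (MonoidAlgebra F G))
  haveI : IsSemisimpleRing (MonoidAlgebra F G) := by
    haveI : NeZero (Nat.card G : F) := by rw [Nat.card_eq_fintype_card]; exact hNZ
    infer_instance
  haveI : IsReduced (MonoidAlgebra F G) := reduced_of_ss
  haveI : Finite (MaximalSpectrum (MonoidAlgebra F G)) := inferInstance
  letI : Fintype (MaximalSpectrum (MonoidAlgebra F G)) := Fintype.ofFinite _
  letI : ∀ I : MaximalSpectrum (MonoidAlgebra F G),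
      Field (MonoidAlgebra F G ⧸ I.asIdeal) :=
    fun I => IsArtinianRing.fieldOfSubtypeIsMaximal _ I
  exact key_sum (IsArtinianRing.equivPi (MonoidAlgebra F G)).toRingEquiv
    (eH_idem F hchar sharp hsharp H hH) P hP
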